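/- Let f : I ⊆ ℝ → ℝ be differentiable on the interior of I, u, v ∈ I with u < v, 0 ≤ λ, μ ≤ 1, f' integrable, and suppose |f'|^r is s-convex in the second sense on [u,v] for some fixed s ∈ (0,1], where p, r > 1 with 1/p + 1/r = 1. Then |(λ f(u) + μ f(v))/2 + ((2-λ-μ)/2) f((u+v)/2) - (1/(v-u)) ∫ᵤᵛ f(x) dx| ≤ ((v-u)/4) (((1-λ)^(p+1) + λ^(p+1))/(p+1))^(1/p) · (((2^(s+1)-1)/(2^s(s+1))) |f'(u)|^r + (1/(2^s(s+1))) |f'(v)|^r)^(1/r) + ((v-u)/4) ((μ^(p+1) + (1-μ)^(p+1))/(p+1))^(1/p) · ((1/(2^s(s+1))) |f'(u)|^r + ((2^(s+1)-1)/(2^s(s+1))) |f'(v)|^r)^(1/r). -/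

import Mathlib

set_option maxHeartbeats 4000000

open MeasureTheory intervalIntegral

/-- `g` is s-convex in the second sense on `[u, v]`. -/
def SConvexSecond (s u v : ℝ) (g : ℝ → ℝ) : Prop :=
  ∀ x ∈ Set.Icc u v, ∀ y ∈ Set.Icc u v, ∀ a ∈ Set.Icc (0:ℝ) 1,
    g (a * x + (1 - a) * y) ≤ a ^ s * g x + (1 - a) ^ s * g y

private lemma kernel_int (a b c p : ℝ) (hc : c ∈ Set.Icc a b) (hp : 0 < p) :
    ∫ x in a..b, |x - c| ^ p = ((c - a) ^ (p+1) + (b - c) ^ (p+1)) / (p+1) := by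
  have hcont : ∀ d : ℝ, Continuous (fun x : ℝ => |x - d| ^ p) := fun d =>
    Continuous.rpow_const (continuous_abs.comp (continuous_id.sub continuous_const))
      (fun x => Or.inr hp.le)
  have h1 : ∫ x in a..c, |x - c| ^ p = (c - a) ^ (p+1) / (p+1) := by
    have : ∫ x in a..c, |x - c| ^ p = ∫ x in a..c, (c - x) ^ p := by
      apply intervalIntegral.integral_congr
      intro x hx
      rw [Set.uIcc_of_le hc.1] at hx
      show |x - c| ^ p = (c - x) ^ p
      rw [abs_of_nonpos (by linarith [hx.2])]
      ring_nf
    rw [this]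
    have h2 : (fun x : ℝ => (c - x) ^ p) = fun x => (fun y : ℝ => y ^ p) (c - x) := rfl
    rw [h2, intervalIntegral.integral_comp_sub_left (fun y : ℝ => y ^ p) c, sub_self]
    rw [integral_rpow (Or.inl (by linarith))]
    rw [Real.zero_rpow (by linarith)]
    ring
  have h2 : ∫ x in c..b, |x - c| ^ p = (b - c) ^ (p+1) / (p+1) := by
    have : ∫ x in c..b, |x - c| ^ p = ∫ x in c..b, (x - c) ^ p := by
      apply intervalIntegral.integral_congr
      intro x hx
      rw [Set.uIcc_of_le hc.2] at hx
      show |x - c| ^ p = (x - c) ^ p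
      rw [abs_of_nonneg (by linarith [hx.1])]
    rw [this]
    rw [intervalIntegral.integral_comp_sub_right (fun y : ℝ => y ^ p) c, sub_self]
    rw [integral_rpow (Or.inl (by linarith))]
    rw [Real.zero_rpow (by linarith)]
    ring
  rw [← intervalIntegral.integral_add_adjacent_intervals
    ((hcont c).intervalIntegrable a c) ((hcont c).intervalIntegrable c b), h1, h2]
  ring

private lemma half_bound (g : ℝ → ℝ) (a b c p r B : ℝ) (φ : ℝ → ℝ) (hab : a < b)
    (hc : c ∈ Set.Icc a b) (hp : 1 < p) (hr : 1 < r) (hpr : 1/p + 1/r = 1)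
    (hg : IntegrableOn g (Set.Ioc a b))
    (hB : ∀ x ∈ Set.Icc a b, |g x| ^ r ≤ B)
    (hφc : Continuous φ) (hgφ : ∀ x ∈ Set.Icc a b, |g x| ^ r ≤ φ x) :
    |∫ x in a..b, (x - c) * g x| ≤
      (((c - a) ^ (p+1) + (b - c) ^ (p+1)) / (p+1)) ^ (1/p) * (∫ x in a..b, φ x) ^ (1/r) := by
  have hr0 : (0:ℝ) < r := by linarith
  have hpr' : Real.HolderConjugate p r := Real.holderConjugate_iff.mpr ⟨hp, by rw [← one_div, ← one_div]; exact hpr⟩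
  set μ := volume.restrict (Set.Ioc a b) with hμ
  haveI : IsFiniteMeasure μ := ⟨by rw [hμ, Measure.restrict_apply_univ]; exact measure_Ioc_lt_top⟩
  have habs : ∀ x ∈ Set.Icc a b, |g x| ≤ B ^ (1/r) := by
    intro x hx
    have h1 : |g x| = (|g x| ^ r) ^ (1/r) := by
      rw [← Real.rpow_mul (abs_nonneg _), mul_one_div, div_self hr0.ne', Real.rpow_one]
    rw [h1]
    exact Real.rpow_le_rpow (Real.rpow_nonneg (abs_nonneg _) _) (hB x hx) (by positivity)
  have hmem1 : MemLp (fun x : ℝ => x - c) (ENNReal.ofReal p) μ := by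
    apply MemLp.of_bound ((continuous_id.sub continuous_const).aestronglyMeasurable) (b - a)
    rw [hμ]
    refine (ae_restrict_iff' measurableSet_Ioc).2 (Filter.Eventually.of_forall fun x hx => ?_)
    rw [Real.norm_eq_abs, abs_le]
    simp only [Pi.sub_apply, id_eq]
    constructor <;> [linarith [hx.1, hc.2]; linarith [hx.2, hc.1]]
  have hmem2 : MemLp g (ENNReal.ofReal r) μ := by
    apply MemLp.of_bound hg.aestronglyMeasurable (B ^ (1/r))
    refine (ae_restrict_iff' measurableSet_Ioc).2 (Filter.Eventually.of_forall fun x hx => ?_)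
    exact habs x ⟨hx.1.le, hx.2⟩
  have key := integral_mul_norm_le_Lp_mul_Lq (μ := μ) hpr' hmem1 hmem2
  simp only [Real.norm_eq_abs] at key
  have hgr_int : IntervalIntegrable (fun x => |g x| ^ r) volume a b := by
    rw [intervalIntegrable_iff_integrableOn_Ioc_of_le hab.le]
    have h := hmem2.integrable_norm_rpow (by simp [ENNReal.ofReal_eq_zero]; linarith)
      ENNReal.ofReal_ne_top
    have h' : Integrable (fun x => |g x| ^ r) μ := by
      simpa [ENNReal.toReal_ofReal hr0.le, Real.norm_eq_abs] using h
    exact h'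
  have hmono : ∫ x in a..b, |g x| ^ r ≤ ∫ x in a..b, φ x :=
    intervalIntegral.integral_mono_on hab.le hgr_int (hφc.intervalIntegrable a b) hgφ
  have hint_nonneg : 0 ≤ ∫ x in a..b, |g x| ^ r :=
    intervalIntegral.integral_nonneg hab.le (fun x _ => Real.rpow_nonneg (abs_nonneg _) _)
  calc |∫ x in a..b, (x - c) * g x| ≤ ∫ x in a..b, |(x - c) * g x| :=
        intervalIntegral.abs_integral_le_integral_abs hab.le
    _ = ∫ x in a..b, |x - c| * |g x| := by simp_rw [abs_mul]
    _ = ∫ x, |x - c| * |g x| ∂μ := by rw [intervalIntegral.integral_of_le hab.le]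
    _ ≤ (∫ x, |x - c| ^ p ∂μ) ^ (1/p) * (∫ x, |g x| ^ r ∂μ) ^ (1/r) := key
    _ = (∫ x in a..b, |x - c| ^ p) ^ (1/p) * (∫ x in a..b, |g x| ^ r) ^ (1/r) := by
        rw [intervalIntegral.integral_of_le hab.le, intervalIntegral.integral_of_le hab.le]
    _ ≤ (∫ x in a..b, |x - c| ^ p) ^ (1/p) * (∫ x in a..b, φ x) ^ (1/r) := by
        apply mul_le_mul_of_nonneg_left
          (Real.rpow_le_rpow hint_nonneg hmono (by positivity))
        apply Real.rpow_nonneg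
        exact intervalIntegral.integral_nonneg hab.le
          (fun x _ => Real.rpow_nonneg (abs_nonneg _) _)
    _ = (((c - a) ^ (p+1) + (b - c) ^ (p+1)) / (p+1)) ^ (1/p) * (∫ x in a..b, φ x) ^ (1/r) := by
        rw [kernel_int a b c p hc (by linarith)]

private lemma g1 (u v a b s : ℝ) (hs : 0 < s) (huv : u ≤ v) (hau : u ≤ a) (hab : a ≤ b) :
    ∫ x in a..b, ((x - u)/(v - u)) ^ s
      = (((b - u) ^ (s+1) - (a - u) ^ (s+1)) / (s+1)) / (v - u) ^ s := by
  have h1 : ∫ x in a..b, ((x - u)/(v - u)) ^ s = ∫ x in a..b, (x - u) ^ s / (v - u) ^ s := by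
    apply intervalIntegral.integral_congr
    intro x hx
    rw [Set.uIcc_of_le hab] at hx
    show ((x - u)/(v - u)) ^ s = (x - u) ^ s / (v - u) ^ s
    exact Real.div_rpow (by linarith [hx.1]) (by linarith) s
  rw [h1, intervalIntegral.integral_div,
    intervalIntegral.integral_comp_sub_right (fun y : ℝ => y ^ s) u,
    integral_rpow (Or.inl (by linarith))]

private lemma g2 (u v a b s : ℝ) (hs : 0 < s) (huv : u ≤ v) (hbv : b ≤ v) (hab : a ≤ b) :
    ∫ x in a..b, ((v - x)/(v - u)) ^ s
      = (((v - a) ^ (s+1) - (v - b) ^ (s+1)) / (s+1)) / (v - u) ^ s := by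
  have h1 : ∫ x in a..b, ((v - x)/(v - u)) ^ s = ∫ x in a..b, (v - x) ^ s / (v - u) ^ s := by
    apply intervalIntegral.integral_congr
    intro x hx
    rw [Set.uIcc_of_le hab] at hx
    show ((v - x)/(v - u)) ^ s = (v - x) ^ s / (v - u) ^ s
    exact Real.div_rpow (by linarith [hx.2]) (by linarith) s
  rw [h1, intervalIntegral.integral_div,
    intervalIntegral.integral_comp_sub_left (fun y : ℝ => y ^ s) v,
    integral_rpow (Or.inl (by linarith))]

theorem stmt_5 (f f' : ℝ → ℝ) (u v l m p r s : ℝ) (hu : 0 ≤ u) (huv : u < v)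
    (hl : l ∈ Set.Icc (0:ℝ) 1) (hm : m ∈ Set.Icc (0:ℝ) 1)
    (hs : s ∈ Set.Ioc (0:ℝ) 1) (hp : 1 < p) (hr : 1 < r) (hpr : 1 / p + 1 / r = 1)
    (hd : ∀ x ∈ Set.Icc u v, HasDerivAt f (f' x) x)
    (hint : IntervalIntegrable f' volume u v)
    (hsc : SConvexSecond s u v (fun x => |f' x| ^ r)) :
    |(l * f u + m * f v) / 2 + ((2 - l - m) / 2) * f ((u + v) / 2)
        - (1 / (v - u)) * ∫ x in u..v, f x|
      ≤ ((v - u) / 4) * (((1 - l) ^ (p + 1) + l ^ (p + 1)) / (p + 1)) ^ (1 / p) *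
          (((2 ^ (s + 1) - 1) / (2 ^ s * (s + 1))) * |f' u| ^ r
            + (1 / (2 ^ s * (s + 1))) * |f' v| ^ r) ^ (1 / r)
        + ((v - u) / 4) * ((m ^ (p + 1) + (1 - m) ^ (p + 1)) / (p + 1)) ^ (1 / p) *
          ((1 / (2 ^ s * (s + 1))) * |f' u| ^ r
            + ((2 ^ (s + 1) - 1) / (2 ^ s * (s + 1))) * |f' v| ^ r) ^ (1 / r) := by
  obtain ⟨hl0, hl1⟩ := hl
  obtain ⟨hm0', hm1⟩ := hm
  obtain ⟨hs0, hs1⟩ := hs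
  have hD : 0 < v - u := sub_pos.2 huv
  set m0 : ℝ := (u + v) / 2 with hm0def
  have hum0 : u < m0 := by rw [hm0def]; linarith
  have hm0v : m0 < v := by rw [hm0def]; linarith
  set c₁ : ℝ := u + l * (v - u) / 2 with hc1def
  set c₂ : ℝ := v - m * (v - u) / 2 with hc2def
  have hc1 : c₁ ∈ Set.Icc u m0 := by
    constructor
    · rw [hc1def]; nlinarith
    · rw [hc1def, hm0def]; nlinarith
  have hc2 : c₂ ∈ Set.Icc m0 v := by
    constructor
    · rw [hc2def, hm0def]; nlinarith
    · rw [hc2def]; nlinarith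
  have hfc : ContinuousOn f (Set.Icc u v) := fun x hx => (hd x hx).continuousAt.continuousWithinAt
  have hsub1 : Set.uIcc u m0 ⊆ Set.Icc u v := by
    rw [Set.uIcc_of_le hum0.le]; exact Set.Icc_subset_Icc le_rfl hm0v.le
  have hsub2 : Set.uIcc m0 v ⊆ Set.Icc u v := by
    rw [Set.uIcc_of_le hm0v.le]; exact Set.Icc_subset_Icc hum0.le le_rfl
  have hfi1 : IntervalIntegrable f volume u m0 := (hfc.mono hsub1).intervalIntegrable
  have hfi2 : IntervalIntegrable f volume m0 v := (hfc.mono hsub2).intervalIntegrable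
  have hint1 : IntervalIntegrable f' volume u m0 :=
    hint.mono_set (by rw [Set.uIcc_of_le huv.le]; exact hsub1)
  have hint2 : IntervalIntegrable f' volume m0 v :=
    hint.mono_set (by rw [Set.uIcc_of_le huv.le]; exact hsub2)
  have parts : ∀ a b c : ℝ, Set.uIcc a b ⊆ Set.Icc u v → IntervalIntegrable f' volume a b →
      ∫ x in a..b, (x - c) * f' x
        = (b - c) * f b - (a - c) * f a - ∫ x in a..b, f x := by
    intro a b c hsub hi
    have h := intervalIntegral.integral_mul_deriv_eq_deriv_mul
      (u := fun x => x - c) (u' := fun _ => (1:ℝ)) (v := f) (v' := f')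
      (fun x _ => (hasDerivAt_id x).sub_const c) (fun x hx => hd x (hsub hx))
      intervalIntegrable_const hi
    simpa using h
  set S₁ := ∫ x in u..m0, (x - c₁) * f' x with hS1
  set S₂ := ∫ x in m0..v, (x - c₂) * f' x with hS2
  have hP1 : S₁ = (m0 - c₁) * f m0 - (u - c₁) * f u - ∫ x in u..m0, f x :=
    parts u m0 c₁ hsub1 hint1
  have hP2 : S₂ = (v - c₂) * f v - (m0 - c₂) * f m0 - ∫ x in m0..v, f x :=
    parts m0 v c₂ hsub2 hint2
  have hsum : (∫ x in u..m0, f x) + (∫ x in m0..v, f x) = ∫ x in u..v, f x :=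
    intervalIntegral.integral_add_adjacent_intervals hfi1 hfi2
  have hid : (l * f u + m * f v) / 2 + ((2 - l - m) / 2) * f m0
      - (1 / (v - u)) * ∫ x in u..v, f x = (S₁ + S₂) / (v - u) := by
    rw [hP1, hP2, ← hsum, hc1def, hc2def, hm0def]
    field_simp
    ring
  -- s-convexity bound
  set Au := |f' u| ^ r with hAudef
  set Av := |f' v| ^ r with hAvdef
  have hAu0 : 0 ≤ Au := Real.rpow_nonneg (abs_nonneg _) _
  have hAv0 : 0 ≤ Av := Real.rpow_nonneg (abs_nonneg _) _
  set φ : ℝ → ℝ := fun x => ((x - u)/(v - u)) ^ s * Av + ((v - x)/(v - u)) ^ s * Au with hφ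
  have hcont1 : Continuous fun x : ℝ => ((x - u)/(v - u)) ^ s :=
    Continuous.rpow_const ((continuous_id.sub continuous_const).div_const _)
      (fun x => Or.inr hs0.le)
  have hcont2 : Continuous fun x : ℝ => ((v - x)/(v - u)) ^ s :=
    Continuous.rpow_const ((continuous_const.sub continuous_id).div_const _)
      (fun x => Or.inr hs0.le)
  have hφc : Continuous φ := by
    rw [hφ]; exact (hcont1.mul continuous_const).add (hcont2.mul continuous_const)
  have hgφ : ∀ x ∈ Set.Icc u v, |f' x| ^ r ≤ φ x := by
    intro x hx
    have ha0 : 0 ≤ (x - u)/(v - u) := div_nonneg (by linarith [hx.1]) hD.le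
    have ha1 : (x - u)/(v - u) ≤ 1 := (div_le_one hD).2 (by linarith [hx.2])
    have h := hsc v ⟨huv.le, le_rfl⟩ u ⟨le_rfl, huv.le⟩ ((x - u)/(v - u)) ⟨ha0, ha1⟩
    simp only at h
    have hax : (x - u)/(v - u) * v + (1 - (x - u)/(v - u)) * u = x := by
      field_simp
      ring
    have h1a : 1 - (x - u)/(v - u) = (v - x)/(v - u) := by
      field_simp
      ring
    rw [hax, h1a] at h
    simpa only [hφ, ← hAudef, ← hAvdef] using h
  have hBd : ∀ x ∈ Set.Icc u v, |f' x| ^ r ≤ Av + Au := by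
    intro x hx
    refine (hgφ x hx).trans ?_
    have ha0 : 0 ≤ (x - u)/(v - u) := div_nonneg (by linarith [hx.1]) hD.le
    have ha1 : (x - u)/(v - u) ≤ 1 := (div_le_one hD).2 (by linarith [hx.2])
    have hb0 : 0 ≤ (v - x)/(v - u) := div_nonneg (by linarith [hx.2]) hD.le
    have hb1 : (v - x)/(v - u) ≤ 1 := (div_le_one hD).2 (by linarith [hx.1])
    have h1 : ((x - u)/(v - u)) ^ s ≤ 1 := Real.rpow_le_one ha0 ha1 hs0.le
    have h2 : ((v - x)/(v - u)) ^ s ≤ 1 := Real.rpow_le_one hb0 hb1 hs0.le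
    simp only [hφ]
    nlinarith [mul_le_mul_of_nonneg_right h1 hAv0, mul_le_mul_of_nonneg_right h2 hAu0]
  -- Hölder for each half
  have hIoc1 : IntegrableOn f' (Set.Ioc u m0) := hint.1.mono_set (Set.Ioc_subset_Ioc le_rfl hm0v.le)
  have hIoc2 : IntegrableOn f' (Set.Ioc m0 v) := hint.1.mono_set (Set.Ioc_subset_Ioc hum0.le le_rfl)
  have hH1 := half_bound f' u m0 c₁ p r (Av + Au) φ hum0 hc1 hp hr hpr hIoc1
    (fun x hx => hBd x (Set.Icc_subset_Icc le_rfl hm0v.le hx))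
    hφc (fun x hx => hgφ x (Set.Icc_subset_Icc le_rfl hm0v.le hx))
  have hH2 := half_bound f' m0 v c₂ p r (Av + Au) φ hm0v hc2 hp hr hpr hIoc2
    (fun x hx => hBd x (Set.Icc_subset_Icc hum0.le le_rfl hx))
    hφc (fun x hx => hgφ x (Set.Icc_subset_Icc hum0.le le_rfl hx))
  -- evaluate the φ integrals
  have hval : ∀ a b : ℝ, u ≤ a → a ≤ b → b ≤ v →
      ∫ x in a..b, φ x = ((((b - u) ^ (s+1) - (a - u) ^ (s+1)) / (s+1)) / (v - u) ^ s) * Av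
        + ((((v - a) ^ (s+1) - (v - b) ^ (s+1)) / (s+1)) / (v - u) ^ s) * Au := by
    intro a b hua hab hbv
    rw [hφ]
    beta_reduce
    rw [intervalIntegral.integral_add (f := fun x => ((x - u)/(v - u)) ^ s * Av)
      (g := fun x => ((v - x)/(v - u)) ^ s * Au)
      ((hcont1.mul continuous_const).intervalIntegrable _ _)
      ((hcont2.mul continuous_const).intervalIntegrable _ _),
      intervalIntegral.integral_mul_const, intervalIntegral.integral_mul_const,
      g1 u v a b s hs0 huv.le hua hab, g2 u v a b s hs0 huv.le hbv hab]
  have h2s : (2:ℝ)^(s+1) = 2^s*2 := Real.rpow_add_one two_ne_zero s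
  have hDs1 : (v-u)^(s+1) = (v-u)^s*(v-u) := Real.rpow_add_one hD.ne' s
  have hhalf : ((v-u)/2)^(s+1) = (v-u)^(s+1)/2^(s+1) := Real.div_rpow hD.le (by norm_num) _
  have h2s0 : (0:ℝ) < 2^s := Real.rpow_pos_of_pos (by norm_num) s
  have hDs0 : (0:ℝ) < (v-u)^s := Real.rpow_pos_of_pos hD s
  have hs10 : (0:ℝ) < s + 1 := by linarith
  have hval1 : ∫ x in u..m0, φ x
      = ((v-u)/2) * ((2^(s+1)-1)/(2^s*(s+1)) * Au + 1/(2^s*(s+1)) * Av) := by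
    rw [hval u m0 le_rfl hum0.le hm0v.le]
    have e0 : m0 - u = (v-u)/2 := by rw [hm0def]; ring
    have e0' : v - m0 = (v-u)/2 := by rw [hm0def]; ring
    rw [e0, e0', sub_self, Real.zero_rpow hs10.ne', hhalf, hDs1, h2s]
    field_simp
    ring
  have hval2 : ∫ x in m0..v, φ x
      = ((v-u)/2) * (1/(2^s*(s+1)) * Au + (2^(s+1)-1)/(2^s*(s+1)) * Av) := by
    rw [hval m0 v hum0.le hm0v.le le_rfl]
    have e0 : v - m0 = (v-u)/2 := by rw [hm0def]; ring
    have e1 : m0 - u = (v-u)/2 := by rw [hm0def]; ring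
    rw [e0, e1, sub_self, Real.zero_rpow hs10.ne', hhalf, hDs1, h2s]
    field_simp
    ring
  -- abbreviations matching the goal
  set Cl := ((1-l)^(p+1) + l^(p+1))/(p+1) with hCldef
  set Cm := (m^(p+1) + (1-m)^(p+1))/(p+1) with hCmdef
  set B1 := (2^(s+1)-1)/(2^s*(s+1)) * Au + 1/(2^s*(s+1)) * Av with hB1def
  set B2 := 1/(2^s*(s+1)) * Au + (2^(s+1)-1)/(2^s*(s+1)) * Av with hB2def
  have h21 : (1:ℝ) ≤ 2^(s+1) := by
    have := Real.rpow_le_rpow_of_exponent_le (one_le_two (α := ℝ)) (by linarith : (0:ℝ) ≤ s + 1)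
    simpa using this
  have hB10 : 0 ≤ B1 := by
    rw [hB1def]
    have c1 : (0:ℝ) ≤ (2^(s+1)-1)/(2^s*(s+1)) := div_nonneg (by linarith) (by positivity)
    have c2 : (0:ℝ) ≤ 1/(2^s*(s+1)) := by positivity
    nlinarith [mul_nonneg c1 hAu0, mul_nonneg c2 hAv0]
  have hB20 : 0 ≤ B2 := by
    rw [hB2def]
    have c1 : (0:ℝ) ≤ (2^(s+1)-1)/(2^s*(s+1)) := div_nonneg (by linarith) (by positivity)
    have c2 : (0:ℝ) ≤ 1/(2^s*(s+1)) := by positivity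
    nlinarith [mul_nonneg c1 hAv0, mul_nonneg c2 hAu0]
  have hCl0 : 0 ≤ Cl := by
    rw [hCldef]
    exact div_nonneg (add_nonneg (Real.rpow_nonneg (by linarith) _)
      (Real.rpow_nonneg hl0 _)) (by linarith)
  have hCm0 : 0 ≤ Cm := by
    rw [hCmdef]
    exact div_nonneg (add_nonneg (Real.rpow_nonneg hm0' _)
      (Real.rpow_nonneg (by linarith) _)) (by linarith)
  -- kernel evaluations
  have hmul : ∀ t : ℝ, 0 ≤ t → (t*((v-u)/2))^(p+1) = t^(p+1) * ((v-u)/2)^(p+1) :=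
    fun t ht => Real.mul_rpow ht (by positivity)
  have hK1 : ((c₁ - u)^(p+1) + (m0 - c₁)^(p+1))/(p+1) = Cl * ((v-u)/2)^(p+1) := by
    have e1 : c₁ - u = l*((v-u)/2) := by rw [hc1def]; ring
    have e2 : m0 - c₁ = (1-l)*((v-u)/2) := by rw [hc1def, hm0def]; ring
    rw [e1, e2, hmul l hl0, hmul (1-l) (by linarith), hCldef]
    ring
  have hK2 : ((c₂ - m0)^(p+1) + (v - c₂)^(p+1))/(p+1) = Cm * ((v-u)/2)^(p+1) := by
    have e1 : c₂ - m0 = (1-m)*((v-u)/2) := by rw [hc2def, hm0def]; ring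
    have e2 : v - c₂ = m*((v-u)/2) := by rw [hc2def]; ring
    rw [e1, e2, hmul (1-m) (by linarith), hmul m hm0', hCmdef]
    ring
  -- exponent arithmetic
  have hp0 : (0:ℝ) < p := by linarith
  have hexp : (p+1)*(1/p) + 1/r = 2 := by
    have h1p : (p+1)*(1/p) = 1 + 1/p := by
      rw [mul_one_div, add_div, div_self hp0.ne']
    rw [h1p]
    linarith [hpr]
  have hhalfpos : (0:ℝ) < (v-u)/2 := by linarith
  have hcomb : ∀ C B' : ℝ, 0 ≤ C → 0 ≤ B' →
      (C * ((v-u)/2)^(p+1))^(1/p) * (((v-u)/2) * B')^(1/r)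
        = ((v-u)/2)*((v-u)/2) * (C^(1/p) * B'^(1/r)) := by
    intro C B' hC hB'
    have key : (C * ((v-u)/2)^(p+1))^(1/p) * (((v-u)/2) * B')^(1/r)
        = C^(1/p) * ((v-u)/2)^((p+1)*(1/p)) * (((v-u)/2)^(1/r) * B'^(1/r)) := by
      rw [Real.mul_rpow hC (by positivity), ← Real.rpow_mul hhalfpos.le,
        Real.mul_rpow hhalfpos.le hB']
    have hmerge : ((v-u)/2)^((p+1)*(1/p)) * ((v-u)/2)^(1/r) = ((v-u)/2)*((v-u)/2) := by
      rw [← Real.rpow_add hhalfpos, hexp,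
        show ((2:ℝ) = ((2:ℕ):ℝ)) by norm_num, Real.rpow_natCast]
      ring
    calc (C * ((v-u)/2)^(p+1))^(1/p) * (((v-u)/2) * B')^(1/r)
        = C^(1/p) * (((v-u)/2)^((p+1)*(1/p)) * ((v-u)/2)^(1/r)) * B'^(1/r) := by
          rw [key]; ring
      _ = ((v-u)/2)*((v-u)/2) * (C^(1/p) * B'^(1/r)) := by rw [hmerge]; ring
  rw [hval1, hK1] at hH1
  rw [hval2, hK2] at hH2
  have hb1 : |S₁| ≤ ((v-u)/2)*((v-u)/2) * (Cl^(1/p) * B1^(1/r)) :=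
    hH1.trans_eq (hcomb Cl B1 hCl0 hB10)
  have hb2 : |S₂| ≤ ((v-u)/2)*((v-u)/2) * (Cm^(1/p) * B2^(1/r)) :=
    hH2.trans_eq (hcomb Cm B2 hCm0 hB20)
  rw [hid, abs_div, abs_of_pos hD]
  calc |S₁ + S₂| / (v - u)
      ≤ (((v-u)/2)*((v-u)/2)*(Cl^(1/p)*B1^(1/r))
          + ((v-u)/2)*((v-u)/2)*(Cm^(1/p)*B2^(1/r))) / (v - u) := by
        gcongr
        calc |S₁ + S₂| ≤ |S₁| + |S₂| := abs_add_le _ _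
          _ ≤ _ := add_le_add hb1 hb2
    _ = ((v - u) / 4) * Cl ^ (1 / p) * B1 ^ (1 / r)
        + ((v - u) / 4) * Cm ^ (1 / p) * B2 ^ (1 / r) := by
        field_simp
        ring
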